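/- If p : ℝ^d×[0,T] → (0,∞) is C² and satisfies ∂ₜp(x,t) − (β(t)/2)( ∇·(p(x,t) x) + σ² Δp(x,t) ) = 0 on ℝ^d×[0,T], then the ratio h(x,t) := p(x,t)/φ(x) satisfies ∂ₜh(x,t) − (β(t)/2)( −∇h(x,t)·x + σ² Δh(x,t) ) = 0 on ℝ^d×[0,T]. -/

import Mathlib

open MeasureTheory Real Set
open scoped RealInnerProductSpace

noncomputable section

/-- `ℝ^d` as a Euclidean space. -/
abbrev E (d : ℕ) := EuclideanSpace ℝ (Fin d)

/-- Spatial divergence of a vector field on `ℝ^d`. -/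
def spaceDiv {d : ℕ} (F : E d → E d) (x : E d) : ℝ :=
  ∑ i, fderiv ℝ F x (EuclideanSpace.single i 1) i

/-- Laplacian of a scalar function on `ℝ^d`. -/
def lap {d : ℕ} (u : E d → ℝ) (x : E d) : ℝ := spaceDiv (fun y => gradient u y) x

/-- The Borel measure on `ℝ^d` with density `ρ` with respect to Lebesgue measure. -/
def densMeasure {d : ℕ} (ρ : E d → ℝ) : Measure (E d) :=
  volume.withDensity fun x => ENNReal.ofReal (ρ x)

/-- `γ` is a coupling of `μ` and `ν`. -/
def IsCoupling {d : ℕ} (γ : Measure (E d × E d)) (μ ν : Measure (E d)) : Prop :=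
  γ.map Prod.fst = μ ∧ γ.map Prod.snd = ν

/-- The 2-Wasserstein distance between two measures on `ℝ^d`. -/
def W2 {d : ℕ} (μ ν : Measure (E d)) : ℝ :=
  Real.sqrt (sInf {c : ℝ | ∃ γ : Measure (E d × E d),
    IsProbabilityMeasure γ ∧ IsCoupling γ μ ν ∧ c = ∫ z, ‖z.1 - z.2‖ ^ 2 ∂γ})

lemma gradient_inner' {d : ℕ} (f : E d → ℝ) (x v : E d) :
    ⟪gradient f x, v⟫ = fderiv ℝ f x v :=
  InnerProductSpace.toDual_symm_apply

lemma clm_apply_eq_sum {d : ℕ} (ℓ : E d →L[ℝ] ℝ) (v : E d) :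
    ℓ v = ∑ i, v i * ℓ (EuclideanSpace.single i 1) := by
  have hv : v = ∑ i, v i • (EuclideanSpace.single i (1:ℝ) : E d) := by
    ext j
    rw [WithLp.ofLp_sum, Finset.sum_apply]
    simp [EuclideanSpace.single_apply]
  conv_lhs => rw [hv]
  rw [map_sum]
  simp [smul_eq_mul]

lemma spaceDiv_smul {d : ℕ} {f : E d → ℝ} {F : E d → E d} {x : E d}
    (hf : DifferentiableAt ℝ f x) (hF : DifferentiableAt ℝ F x) :
    spaceDiv (fun y => f y • F y) x = fderiv ℝ f x (F x) + f x * spaceDiv F x := by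
  have hD := (hf.hasFDerivAt.smul hF.hasFDerivAt).fderiv
  unfold spaceDiv
  rw [show (fun y => f y • F y) = f • F from rfl, hD]
  simp only [ContinuousLinearMap.add_apply, ContinuousLinearMap.coe_smul', Pi.smul_apply,
    ContinuousLinearMap.smulRight_apply, PiLp.add_apply, PiLp.smul_apply, smul_eq_mul]
  rw [Finset.sum_add_distrib, ← Finset.mul_sum, clm_apply_eq_sum (fderiv ℝ f x) (F x)]
  simp_rw [mul_comm]
  ring

lemma spaceDiv_add {d : ℕ} {F G : E d → E d} {x : E d}
    (hF : DifferentiableAt ℝ F x) (hG : DifferentiableAt ℝ G x) :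
    spaceDiv (fun y => F y + G y) x = spaceDiv F x + spaceDiv G x := by
  unfold spaceDiv
  rw [fderiv_fun_add hF hG]
  simp [Finset.sum_add_distrib]

lemma spaceDiv_id {d : ℕ} (x : E d) : spaceDiv (fun y : E d => y) x = d := by
  unfold spaceDiv
  have : fderiv ℝ (fun y : E d => y) x = ContinuousLinearMap.id ℝ (E d) := fderiv_id
  simp [this, EuclideanSpace.single_apply]

lemma innerSL_eq_toDual {d : ℕ} (y : E d) :
    innerSL ℝ y = (InnerProductSpace.toDual ℝ (E d) y : E d →L[ℝ] ℝ) := by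
  ext v; simp [InnerProductSpace.toDual_apply_apply]

lemma hasFDerivAt_psi {d : ℕ} (σ c : ℝ) (hσ : σ ≠ 0) (y : E d) :
    HasFDerivAt (fun z : E d => c * Real.exp ((2*σ^2)⁻¹ * ‖z‖^2))
      (((σ^2)⁻¹ * (c * Real.exp ((2*σ^2)⁻¹ * ‖y‖^2))) • innerSL ℝ y) y := by
  have h1 : HasFDerivAt (fun z : E d => ‖z‖^2) (2 • (innerSL ℝ y)) y :=
    (hasStrictFDerivAt_norm_sq y).hasFDerivAt
  have h2 := (h1.const_mul ((2*σ^2)⁻¹)).exp.const_mul c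
  refine h2.congr_fderiv ?_
  ext v
  simp only [ContinuousLinearMap.coe_smul', Pi.smul_apply, smul_eq_mul,
    ← Nat.cast_smul_eq_nsmul ℝ]
  have hs : (σ:ℝ)^2 ≠ 0 := pow_ne_zero _ hσ
  ring

lemma gradient_psi {d : ℕ} (σ c : ℝ) (hσ : σ ≠ 0) (y : E d) :
    gradient (fun z : E d => c * Real.exp ((2*σ^2)⁻¹ * ‖z‖^2)) y
      = (((σ^2)⁻¹ * (c * Real.exp ((2*σ^2)⁻¹ * ‖y‖^2)))) • y := by
  have h := (hasFDerivAt_psi σ c hσ y).fderiv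
  show (InnerProductSpace.toDual ℝ (E d)).symm _ = _
  rw [h, innerSL_eq_toDual, ← _root_.map_smul, LinearIsometryEquiv.symm_apply_apply]

lemma gradient_mul' {d : ℕ} {f g : E d → ℝ} {x : E d}
    (hf : DifferentiableAt ℝ f x) (hg : DifferentiableAt ℝ g x) :
    gradient (fun y => f y * g y) x = g x • gradient f x + f x • gradient g x := by
  show (InnerProductSpace.toDual ℝ (E d)).symm _ = _
  rw [fderiv_fun_mul hf hg, map_add, _root_.map_smul, _root_.map_smul]
  rw [add_comm]
  rfl


/-- **The ratio `h = p/φ` solves the transformed equation**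
`∂ₜh - (β/2)(-∇h·x + σ²Δh) = 0`. -/
theorem ratio_solves_transformed_pde
    (d : ℕ) (hd : 1 ≤ d) (σ : ℝ) (hσ : 0 < σ) (T : ℝ) (hT : 0 < T)
    (φ : E d → ℝ)
    (hφ : ∀ x : E d,
      φ x = (2 * Real.pi * σ ^ 2) ^ (-(d : ℝ) / 2) * Real.exp (-‖x‖ ^ 2 / (2 * σ ^ 2)))
    (β : ℝ → ℝ) (hβ_cont : ContinuousOn β (Icc 0 T)) (hβ_pos : ∀ t ∈ Icc (0:ℝ) T, 0 < β t)
    (p : E d → ℝ → ℝ) (hp2 : ContDiff ℝ 2 (fun z : E d × ℝ => p z.1 z.2))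
    (hp_pos : ∀ (x : E d), ∀ t ∈ Icc (0:ℝ) T, 0 < p x t)
    (hFP : ∀ (x : E d), ∀ t ∈ Icc (0:ℝ) T,
      deriv (fun τ => p x τ) t
        - β t / 2 * (spaceDiv (fun y => p y t • y) x + σ ^ 2 * lap (fun y => p y t) x) = 0)
    (h : E d → ℝ → ℝ) (hh : ∀ (x : E d) (t : ℝ), h x t = p x t / φ x) :
    ∀ (x : E d), ∀ t ∈ Icc (0:ℝ) T,
      deriv (fun τ => h x τ) t
        - β t / 2 * (-⟪gradient (fun y => h y t) x, x⟫ + σ ^ 2 * lap (fun y => h y t) x)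
        = 0 := by
  intro x t ht
  have hs2 : (σ:ℝ)^2 ≠ 0 := pow_ne_zero _ hσ.ne'
  set c : ℝ := (2 * Real.pi * σ ^ 2) ^ (-(d : ℝ) / 2) with hc_def
  have hc : 0 < c := Real.rpow_pos_of_pos (by positivity) _
  set ψ : E d → ℝ := fun y => c⁻¹ * Real.exp ((2*σ^2)⁻¹ * ‖y‖^2) with hψ_def
  have hψφ : ∀ y : E d, (φ y)⁻¹ = ψ y := by
    intro y
    rw [hφ y, mul_inv, ← Real.exp_neg, hψ_def]
    congr 1
    rw [neg_div, neg_neg, div_eq_inv_mul]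
  have hψd : Differentiable ℝ ψ := fun y =>
    (hasFDerivAt_psi σ c⁻¹ hσ.ne' y).differentiableAt
  have gradψ : ∀ y : E d, gradient ψ y = ((σ^2)⁻¹ * ψ y) • y := fun y =>
    gradient_psi σ c⁻¹ hσ.ne' y
  have fderivψ : ∀ y v : E d, fderiv ℝ ψ y v = ((σ^2)⁻¹ * ψ y) * ⟪y, v⟫ := by
    intro y v
    rw [(hasFDerivAt_psi σ c⁻¹ hσ.ne' y).fderiv]
    simp only [ContinuousLinearMap.coe_smul', Pi.smul_apply, smul_eq_mul, innerSL_apply_apply]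
    rfl
  set q : E d → ℝ := fun y => p y t with hq_def
  have hq : ContDiff ℝ 2 q := hp2.comp (contDiff_id.prodMk contDiff_const)
  have hqd : Differentiable ℝ q := hq.differentiable (by norm_num)
  have hq' : Differentiable ℝ (fun y => gradient q y) := by
    have h1 : Differentiable ℝ (fderiv ℝ q) :=
      (hq.fderiv_right (m := 1) (by norm_num)).differentiable (by norm_num)
    have h2 : (fun y => gradient q y)
        = fun y => (InnerProductSpace.toDual ℝ (E d)).symm (fderiv ℝ q y) := rfl
    rw [h2]
    exact (LinearIsometryEquiv.differentiable _).comp h1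
  have hfun : (fun y => h y t) = fun y => q y * ψ y := by
    funext y; rw [hh, div_eq_mul_inv, hψφ]
  have htime : (fun τ => h x τ) = fun τ => p x τ / φ x := by
    funext τ; exact hh x τ
  -- gradient of the product, as a function
  have grad_h : ∀ y : E d, gradient (fun z => q z * ψ z) y
      = ψ y • gradient q y + ((σ^2)⁻¹ * (q y * ψ y)) • y := by
    intro y
    rw [gradient_mul' (hqd y) (hψd y), gradψ y, smul_smul,
      show q y * ((σ^2)⁻¹ * ψ y) = (σ^2)⁻¹ * (q y * ψ y) from by ring]
  set A : ℝ := fderiv ℝ (fun z => q z * ψ z) x x with hA_def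
  set B : ℝ := fderiv ℝ q x x with hB_def
  set L : ℝ := lap q x with hL_def
  have hqψd : Differentiable ℝ (fun z => q z * ψ z) := hqd.mul hψd
  -- Laplacian of the product
  have hlap : lap (fun z => q z * ψ z) x
      = ((σ^2)⁻¹ * ψ x * B + ψ x * L)
        + ((σ^2)⁻¹ * A + ((σ^2)⁻¹ * (q x * ψ x)) * d) := by
    have e1 : (fun y => gradient (fun z => q z * ψ z) y)
        = fun y => (fun y' => ψ y' • gradient q y') y + (fun y' => ((σ^2)⁻¹ * (q y' * ψ y')) • y') y :=
      funext grad_h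
    show spaceDiv _ x = _
    rw [e1, spaceDiv_add (F := fun y' => ψ y' • gradient q y')
      (G := fun y' => ((σ^2)⁻¹ * (q y' * ψ y')) • y') ((hψd x).smul (hq' x))
      (((differentiableAt_const _).mul ((hqd x).mul (hψd x))).smul differentiableAt_fun_id)]
    have t1 : spaceDiv (fun y' => ψ y' • gradient q y') x
        = (σ^2)⁻¹ * ψ x * B + ψ x * L := by
      rw [spaceDiv_smul (hψd x) (hq' x)]
      rw [fderivψ x (gradient q x), real_inner_comm, gradient_inner']
      rw [show spaceDiv (fun y => gradient q y) x = L from rfl]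
    have t2 : spaceDiv (fun y' => ((σ^2)⁻¹ * (q y' * ψ y')) • y') x
        = (σ^2)⁻¹ * A + ((σ^2)⁻¹ * (q x * ψ x)) * d := by
      rw [spaceDiv_smul (f := fun y' => (σ^2)⁻¹ * (q y' * ψ y')) ((differentiableAt_const _).mul ((hqd x).mul (hψd x)))
        differentiableAt_fun_id, spaceDiv_id]
      congr 1
      rw [fderiv_const_mul (show DifferentiableAt ℝ (fun y' => q y' * ψ y') x from (hqd x).mul (hψd x))]
      simp [hA_def]
    rw [t1, t2]
  -- inner product term
  have hinner : ⟪gradient (fun z => q z * ψ z) x, x⟫ = A := gradient_inner' _ _ _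
  -- divergence in FP equation
  have hdiv : spaceDiv (fun y => p y t • y) x = B + q x * (d:ℝ) := by
    have : (fun y => p y t • y) = fun y => q y • (fun y' : E d => y') y := rfl
    rw [this, spaceDiv_smul (hqd x) differentiableAt_fun_id, spaceDiv_id]
  -- time derivative
  have hderiv : deriv (fun τ => h x τ) t = deriv (fun τ => p x τ) t * ψ x := by
    rw [htime, deriv_div_const, div_eq_mul_inv, hψφ]
  have hFPx := hFP x t ht
  rw [hdiv] at hFPx
  -- assemble
  rw [hderiv, hfun, hinner, hlap]
  have hL' : lap (fun y => p y t) x = L := rfl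
  rw [hL'] at hFPx
  have hD : deriv (fun τ => p x τ) t = β t / 2 * (B + q x * (d:ℝ) + σ^2 * L) := by
    linarith
  rw [hD]
  field_simp
  ring
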